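/- Let γ, δ > 0. The system ω² = γδ·cos(ωd), ω = γ·sin(ωd) in the unknowns ω > 0 and d > 0 is solved by ω* = sqrt((−δ² + sqrt(δ⁴ + 4γ²δ²))/2) and d* = arcsin(ω*/γ)/ω*. In particular 0 < ω* < γ, so d* is well-defined. -/

import Mathlib

open Real

/-- The critical point equations `ω² = γδ cos(ωd)`, `ω = γ sin(ωd)` for the shifted
exponential delay distribution are solved by the indicated `ω*` and `d*`, and `0 < ω* < γ`
so that `d*` is well-defined. -/
theorem shifted_exponential_critical_point
    (γ δ : ℝ) (hγ : 0 < γ) (hδ : 0 < δ) :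
    let ωs := Real.sqrt ((-δ ^ 2 + Real.sqrt (δ ^ 4 + 4 * γ ^ 2 * δ ^ 2)) / 2)
    let ds := Real.arcsin (ωs / γ) / ωs
    0 < ωs ∧ ωs < γ ∧
      ωs ^ 2 = γ * δ * Real.cos (ωs * ds) ∧
      ωs = γ * Real.sin (ωs * ds) := by
  intro ωs ds
  set A := δ ^ 4 + 4 * γ ^ 2 * δ ^ 2 with hAdef
  have hA0 : (0:ℝ) ≤ A := by positivity
  have hA : Real.sqrt A ^ 2 = A := Real.sq_sqrt hA0
  have hAgt : δ ^ 2 < Real.sqrt A := by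
    have h1 : (δ ^ 2 : ℝ) = Real.sqrt (δ ^ 4) := by
      rw [show (δ:ℝ)^4 = (δ^2)^2 by ring, Real.sqrt_sq (by positivity)]
    rw [h1]
    exact Real.sqrt_lt_sqrt (by positivity) (by nlinarith [hAdef, mul_pos hγ hδ, mul_pos (mul_pos hγ hδ) (mul_pos hγ hδ)])
  set x := (-δ ^ 2 + Real.sqrt A) / 2 with hxdef
  have hx : 0 < x := by simp only [hxdef]; linarith
  have hωs2 : ωs ^ 2 = x := Real.sq_sqrt hx.le
  have hωspos : 0 < ωs := Real.sqrt_pos.mpr hx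
  -- key quadratic identity
  have hquad : x ^ 2 = γ ^ 2 * δ ^ 2 - δ ^ 2 * x := by
    simp only [hxdef]
    nlinarith [hA]
  have hxlt : x < γ ^ 2 := by nlinarith [hx]
  have hωslt : ωs < γ := by
    have := Real.sqrt_lt_sqrt hx.le hxlt
    rwa [Real.sqrt_sq hγ.le] at this
  have hωd : ωs * ds = Real.arcsin (ωs / γ) := by
    show ωs * (Real.arcsin (ωs / γ) / ωs) = _
    field_simp [ds, hωspos.ne']
  have hdiv0 : 0 ≤ ωs / γ := by positivity
  have hdiv1 : ωs / γ ≤ 1 := by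
    rw [div_le_one hγ]; exact hωslt.le
  refine ⟨hωspos, hωslt, ?_, ?_⟩
  · rw [hωd, Real.cos_arcsin]
    have hq2 : (ωs ^ 2) ^ 2 = γ ^ 2 * δ ^ 2 - δ ^ 2 * ωs ^ 2 := by
      rw [hωs2]; exact hquad
    have h1 : 1 - (ωs / γ) ^ 2 = (ωs ^ 2 / (γ * δ)) ^ 2 := by
      field_simp
      linear_combination -hq2
    rw [h1, Real.sqrt_sq (by positivity)]
    field_simp
  · rw [hωd, Real.sin_arcsin (by linarith) hdiv1]
    field_simp
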